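/- Let G be a symmetric positive definite n×n integer matrix and fix τ ∈ ℍ. Let λ : sh(G) → ℂ satisfy λ(r + x) = exp(πi·xᵀGx)·λ(r) for all r ∈ sh(G) and x ∈ ℤⁿ, and define ϑ_{G,λ}(τ,z) = Σ_{r ∈ sh(G)} λ(r)·exp(πi·τ·rᵀGr + 2πi·rᵀGz) for z ∈ ℂⁿ. If ϑ_{G,λ}(τ,z) = 0 for all z ∈ ℂⁿ, then λ is identically zero. (Equivalently: for fixed τ ∈ ℍ the basic theta functions ϑ_{G,λ}(τ,·), with λ running through a basis of W(G), are linearly independent as functions of z.) -/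

import Mathlib

open Matrix MeasureTheory

/-- The shadow of a nondegenerate integral lattice with Gram matrix `G`:
`sh(G) = {r ∈ ℚⁿ : rᵀGx − xᵀGx/2 ∈ ℤ for all x ∈ ℤⁿ}`. -/
def latticeShadow {n : ℕ} (G : Matrix (Fin n) (Fin n) ℤ) : Set (Fin n → ℚ) :=
  {r | ∀ x : Fin n → ℤ, ∃ m : ℤ,
    r ⬝ᵥ (G.map (Int.cast : ℤ → ℚ)).mulVec (fun i => (x i : ℚ))
      - ((fun i => (x i : ℚ)) ⬝ᵥ (G.map (Int.cast : ℤ → ℚ)).mulVec (fun i => (x i : ℚ))) / 2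
      = (m : ℚ)}

/-- The basic theta function `ϑ_{G,λ}(τ,z) = Σ_{r ∈ sh(G)} λ(r)·e(τ·β(r) + β(r,z))`
attached to a coefficient function `λ`. -/
noncomputable def thetaFun {n : ℕ} (G : Matrix (Fin n) (Fin n) ℤ)
    (lam : (Fin n → ℚ) → ℂ) (τ : ℂ) (z : Fin n → ℂ) : ℂ :=
  ∑' r : latticeShadow G,
    lam (r : Fin n → ℚ) *
      Complex.exp ((Real.pi : ℂ) * Complex.I * τ *
          ((((r : Fin n → ℚ) ⬝ᵥ (G.map (Int.cast : ℤ → ℚ)).mulVec (r : Fin n → ℚ)) : ℚ) : ℂ)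
        + 2 * (Real.pi : ℂ) * Complex.I *
          ((fun i => (((r : Fin n → ℚ)) i : ℂ)) ⬝ᵥ (G.map (Int.cast : ℤ → ℂ)).mulVec z))

section ThetaAux

variable {n : ℕ}

lemma aux_summable_int {b : ℝ} (hb : 0 < b) :
    Summable fun k : ℤ => Real.exp (-(b * (k : ℝ) ^ 2)) := by
  have key : Summable fun m : ℕ => Real.exp (-(b * (m : ℝ) ^ 2)) := by
    have hgeo : Summable fun m : ℕ => Real.exp (-b) ^ m :=
      summable_geometric_of_lt_one (Real.exp_pos _).le
        (Real.exp_lt_one_iff.mpr (by linarith))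
    refine hgeo.of_nonneg_of_le (fun m => (Real.exp_pos _).le) (fun m => ?_)
    rw [← Real.exp_nat_mul]
    apply Real.exp_le_exp.mpr
    have h1 : (m : ℝ) ≤ (m : ℝ) ^ 2 := by
      have := Nat.le_self_pow (two_ne_zero) m
      exact_mod_cast Nat.cast_le.mpr this
    nlinarith
  apply Summable.of_nat_of_neg <;> simpa using key

lemma aux_summable_pi (n : ℕ) {b : ℝ} (hb : 0 < b) :
    Summable fun w : Fin n → ℤ => ∏ i, Real.exp (-(b * (w i : ℝ) ^ 2)) := by
  induction n with
  | zero => exact Summable.of_finite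
  | succ n ih =>
      rw [← (Fin.consEquiv (fun _ : Fin (n+1) => ℤ)).summable_iff]
      refine (((aux_summable_int hb).mul_of_nonneg ih
        (fun k => (Real.exp_pos _).le)
        (fun w => Finset.prod_nonneg fun i _ => (Real.exp_pos _).le)).congr ?_)
      intro p
      simp [Fin.consEquiv, Fin.prod_univ_succ]

lemma aux_quad_lb (M : Matrix (Fin n) (Fin n) ℝ)
    (hpos : ∀ v : Fin n → ℝ, v ≠ 0 → 0 < v ⬝ᵥ M.mulVec v) :
    ∃ a : ℝ, 0 < a ∧ ∀ v : Fin n → ℝ, a * ‖v‖ ^ 2 ≤ v ⬝ᵥ M.mulVec v := by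
  rcases Nat.eq_zero_or_pos n with hn | hn
  · refine ⟨1, one_pos, fun v => ?_⟩
    subst hn
    have hv : v = 0 := Subsingleton.elim _ _
    have h1 : ‖v‖ = 0 := by rw [hv]; simp
    have h2 : v ⬝ᵥ M.mulVec v = 0 := by simp [dotProduct]
    rw [h1, h2]; norm_num
  · haveI : Nonempty (Fin n) := Fin.pos_iff_nonempty.mp hn
    have hQc : Continuous fun v : Fin n → ℝ => v ⬝ᵥ M.mulVec v := by
      simp only [dotProduct, mulVec]
      fun_prop
    have hcpt : IsCompact (Metric.sphere (0 : Fin n → ℝ) 1) := isCompact_sphere _ _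
    have hne : (Metric.sphere (0 : Fin n → ℝ) 1).Nonempty :=
      NormedSpace.sphere_nonempty.mpr zero_le_one
    obtain ⟨v₀, hv₀S, hv₀min⟩ := hcpt.exists_isMinOn hne hQc.continuousOn
    have hv₀ : v₀ ≠ 0 := by
      intro h
      rw [mem_sphere_iff_norm, h] at hv₀S
      simp at hv₀S
    refine ⟨v₀ ⬝ᵥ M.mulVec v₀, hpos v₀ hv₀, fun v => ?_⟩
    rcases eq_or_ne v 0 with rfl | hv
    · simp
    · set t := ‖v‖ with ht
      have htpos : 0 < t := norm_pos_iff.mpr hv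
      set w := t⁻¹ • v with hw
      have hwS : w ∈ Metric.sphere (0 : Fin n → ℝ) 1 := by
        rw [mem_sphere_iff_norm, sub_zero, hw, norm_smul, norm_inv, norm_norm]
        field_simp
      have hsc : v ⬝ᵥ M.mulVec v = t ^ 2 * (w ⬝ᵥ M.mulVec w) := by
        have hv' : v = t • w := by
          rw [hw, smul_smul, mul_inv_cancel₀ htpos.ne', one_smul]
        rw [hv']
        rw [smul_dotProduct, Matrix.mulVec_smul, dotProduct_smul, smul_eq_mul, smul_eq_mul]
        ring
      have hmin : v₀ ⬝ᵥ M.mulVec v₀ ≤ w ⬝ᵥ M.mulVec w := hv₀min hwS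
      have ht2 : (0:ℝ) < t ^ 2 := by positivity
      rw [hsc]
      nlinarith

lemma cast_dot_QC (G : Matrix (Fin n) (Fin n) ℤ) (v : Fin n → ℚ) (z : Fin n → ℂ) :
    (fun i => (v i : ℂ)) ⬝ᵥ (G.map (Int.cast : ℤ → ℂ)).mulVec z
      = ∑ i, ((v ᵥ* (G.map (Int.cast : ℤ → ℚ))) i : ℂ) * z i := by
  simp only [dotProduct, mulVec, vecMul, Matrix.map_apply, Finset.mul_sum, Finset.sum_mul]
  rw [Finset.sum_comm]
  refine Finset.sum_congr rfl fun i _ => ?_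
  rw [Rat.cast_sum, Finset.sum_mul]
  refine Finset.sum_congr rfl fun j _ => ?_
  push_cast
  ring

lemma cast_quad_QR (G : Matrix (Fin n) (Fin n) ℤ) (v : Fin n → ℚ) :
    ((v ⬝ᵥ (G.map (Int.cast : ℤ → ℚ)).mulVec v : ℚ) : ℝ)
      = (fun i => (v i : ℝ)) ⬝ᵥ (G.map (Int.cast : ℤ → ℝ)).mulVec (fun i => (v i : ℝ)) := by
  simp only [dotProduct, mulVec, Matrix.map_apply]
  push_cast
  rfl

lemma cast_dot_int (G : Matrix (Fin n) (Fin n) ℤ) (x y : Fin n → ℤ) :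
    (fun i => (x i : ℚ)) ⬝ᵥ (G.map (Int.cast : ℤ → ℚ)).mulVec (fun i => (y i : ℚ))
      = ((x ⬝ᵥ G.mulVec y : ℤ) : ℚ) := by
  simp only [dotProduct, mulVec, Matrix.map_apply]
  push_cast
  rfl

lemma vecMul_cast_eval (G : Matrix (Fin n) (Fin n) ℤ) (v : Fin n → ℚ) (i : Fin n) :
    (v ᵥ* (G.map (Int.cast : ℤ → ℚ))) i
      = v ⬝ᵥ (G.map (Int.cast : ℤ → ℚ)).mulVec (fun j => ((Pi.single i 1 : Fin n → ℤ) j : ℚ)) := by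
  have h : (fun j => ((Pi.single i 1 : Fin n → ℤ) j : ℚ)) = Pi.single i (1 : ℚ) := by
    funext j
    rcases eq_or_ne j i with rfl | h
    · simp
    · simp [Pi.single_apply, h]
  rw [h, Matrix.mulVec_single]
  simp only [vecMul, dotProduct, mul_one]
  simp [Matrix.col]

lemma vecMul_int_cast (M : Matrix (Fin n) (Fin n) ℤ) (s : Fin n → ℤ) (i : Fin n) :
    ((fun j => (s j : ℚ)) ᵥ* (M.map (Int.cast : ℤ → ℚ))) i = ((s ᵥ* M) i : ℚ) := by
  simp only [vecMul, dotProduct, Matrix.map_apply]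
  push_cast
  rfl

lemma vecMul_inj (M : Matrix (Fin n) (Fin n) ℚ) (hdet : M.det ≠ 0) {v : Fin n → ℚ}
    (h : v ᵥ* M = 0) : v = 0 := by
  have h2 : (v ᵥ* M) ᵥ* M.adjugate = 0 := by rw [h]; simp [vecMul]
  rw [Matrix.vecMul_vecMul, Matrix.mul_adjugate] at h2
  funext i
  have h3 := congrFun h2 i
  simp only [vecMul, dotProduct, Matrix.smul_apply, Matrix.one_apply, smul_eq_mul, mul_ite,
    mul_one, mul_zero, Finset.sum_ite_eq', Finset.mem_univ, if_true, Pi.zero_apply] at h3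
  rcases mul_eq_zero.mp h3 with h' | h'
  · exact h'
  · exact absurd h' hdet

lemma aux_integral_char (m : ℤ) :
    ∫ x : ℝ, Set.indicator (Set.Icc (0:ℝ) 1)
        (fun t : ℝ => Complex.exp (2 * (Real.pi:ℂ) * Complex.I * (m:ℂ) * (t:ℂ))) x
      = if m = 0 then 1 else 0 := by
  rw [integral_indicator measurableSet_Icc]
  rcases eq_or_ne m 0 with rfl | hm
  · simp only [Int.cast_zero, mul_zero, zero_mul, Complex.exp_zero, if_true]
    rw [setIntegral_const]
    simp [Real.volume_Icc]
  · rw [if_neg hm]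
    set c : ℂ := 2 * (Real.pi:ℂ) * Complex.I * (m:ℂ) with hc
    have hcne : c ≠ 0 := by
      rw [hc]
      apply mul_ne_zero
      apply mul_ne_zero
      apply mul_ne_zero
      · norm_num
      · simpa using Real.pi_ne_zero
      · exact Complex.I_ne_zero
      · simpa using hm
    have h1 : ∫ t in Set.Icc (0:ℝ) 1, Complex.exp (c * t)
        = ∫ t in (0:ℝ)..1, Complex.exp (c * t) := by
      rw [integral_Icc_eq_integral_Ioc, intervalIntegral.integral_of_le zero_le_one]
    have h2 : (fun t : ℝ => Complex.exp (2 * (Real.pi:ℂ) * Complex.I * (m:ℂ) * (t:ℂ)))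
        = fun t : ℝ => Complex.exp (c * t) := by rw [hc]
    rw [h2, h1, integral_exp_mul_complex hcne]
    have h3 : Complex.exp (c * ((1:ℝ):ℂ)) = 1 := by
      rw [Complex.ofReal_one, mul_one, hc]
      have h4 := Complex.exp_int_mul_two_pi_mul_I m
      rw [← h4]
      ring_nf
    rw [h3]
    simp

end ThetaAux

section MainAux

variable {n : ℕ}

lemma vecMul_det (M : Matrix (Fin n) (Fin n) ℚ) (v : Fin n → ℚ) (i : Fin n) :
    ((v ᵥ* M) ᵥ* M.adjugate) i = M.det * v i := by
  rw [Matrix.vecMul_vecMul, Matrix.mul_adjugate]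
  simp only [vecMul, dotProduct, Matrix.smul_apply, Matrix.one_apply, smul_eq_mul, mul_ite,
    mul_one, mul_zero, Finset.sum_ite_eq', Finset.mem_univ, if_true]
  ring

end MainAux

/-- For fixed `τ ∈ ℍ`, the basic theta functions of a positive
definite integral lattice are linearly independent as functions of `z`: if
`ϑ_{G,λ}(τ,·)` vanishes identically, then `λ` vanishes on the shadow. -/
theorem theta_functions_linearly_independent
    {n : ℕ} (G : Matrix (Fin n) (Fin n) ℤ) (hG : G.IsSymm)
    (hpos : ∀ v : Fin n → ℝ, v ≠ 0 → 0 < v ⬝ᵥ (G.map (Int.cast : ℤ → ℝ)).mulVec v)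
    (τ : ℂ) (hτ : 0 < τ.im)
    (lam : (Fin n → ℚ) → ℂ)
    (hlam : ∀ r ∈ latticeShadow G, ∀ x : Fin n → ℤ,
      lam (r + fun i => (x i : ℚ)) =
        Complex.exp ((Real.pi : ℂ) * Complex.I * (((x ⬝ᵥ G.mulVec x) : ℤ) : ℂ)) * lam r)
    (hvanish : ∀ z : Fin n → ℂ, thetaFun G lam τ z = 0) :
    ∀ r ∈ latticeShadow G, lam r = 0 := by
  intro r₀ hr₀
  -- abbreviations (definitionally transparent)
  -- basic closure and norm facts for the shadow
  have hmem_add : ∀ r ∈ latticeShadow G, ∀ x : Fin n → ℤ,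
      (r + fun i => (x i : ℚ)) ∈ latticeShadow G := by
    intro r hr x y
    obtain ⟨m, hm⟩ := hr y
    refine ⟨m + x ⬝ᵥ G.mulVec y, ?_⟩
    rw [add_dotProduct, cast_dot_int G x y]
    push_cast
    linarith [hm]
  have habs : ∀ r ∈ latticeShadow G, ∀ x : Fin n → ℤ,
      ‖lam (r + fun i => (x i : ℚ))‖ = ‖lam r‖ := by
    intro r hr x
    rw [hlam r hr x, norm_mul]
    have h1 : ‖Complex.exp ((Real.pi : ℂ) * Complex.I * (((x ⬝ᵥ G.mulVec x) : ℤ) : ℂ))‖ = 1 := by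
      rw [Complex.norm_exp]
      have h2 : ((Real.pi : ℂ) * Complex.I * (((x ⬝ᵥ G.mulVec x) : ℤ) : ℂ)).re = 0 := by simp
      rw [h2, Real.exp_zero]
    rw [h1, one_mul]
  -- determinant facts
  have hdetR : (G.map (Int.cast : ℤ → ℝ)).det ≠ 0 := by
    intro h
    obtain ⟨v, hv0, hv⟩ := Matrix.exists_mulVec_eq_zero_iff.mpr h
    have h2 := hpos v hv0
    rw [hv, dotProduct_zero] at h2
    exact lt_irrefl _ h2
  have hmapRQ : (G.map (Int.cast : ℤ → ℚ)).map (Rat.cast : ℚ → ℝ) = G.map (Int.cast : ℤ → ℝ) := by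
    ext i j
    simp [Matrix.map_apply]
  have hdetQ : (G.map (Int.cast : ℤ → ℚ)).det ≠ 0 := by
    intro h
    apply hdetR
    rw [← hmapRQ]
    have h2 := RingHom.map_det (Rat.castHom ℝ) (G.map (Int.cast : ℤ → ℚ))
    rw [RingHom.mapMatrix_apply] at h2
    rw [show ((Rat.castHom ℝ : ℚ →+* ℝ) : ℚ → ℝ) = (Rat.cast : ℚ → ℝ) from rfl] at h2
    rw [← h2, h]
    simp
  have hdetZQ : ((G.det : ℚ)) = (G.map (Int.cast : ℤ → ℚ)).det := by
    have h2 := RingHom.map_det (Int.castRingHom ℚ) G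
    rw [RingHom.mapMatrix_apply] at h2
    simpa using h2
  -- half-integrality of the frequencies of shadow vectors
  have hvec_half : ∀ r ∈ latticeShadow G, ∀ i : Fin n, ∃ m : ℤ,
      (r ᵥ* (G.map (Int.cast : ℤ → ℚ))) i = m + (G i i : ℚ) / 2 := by
    intro r hr i
    obtain ⟨m, hm⟩ := hr (Pi.single i 1)
    refine ⟨m, ?_⟩
    rw [vecMul_cast_eval G r i]
    have h2 := cast_dot_int G (Pi.single i 1) (Pi.single i 1)
    have h3 : (Pi.single i 1 : Fin n → ℤ) ⬝ᵥ G.mulVec (Pi.single i 1) = G i i := by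
      rw [Matrix.mulVec_single]
      simp [dotProduct, Pi.single_apply]
    rw [h3] at h2
    rw [h2] at hm
    linarith [hm]
  -- integrality of frequency differences
  have hfreq : ∀ r ∈ latticeShadow G, ∀ i : Fin n, ∃ m : ℤ,
      ((r - r₀) ᵥ* (G.map (Int.cast : ℤ → ℚ))) i = m := by
    intro r hr i
    obtain ⟨m1, h1⟩ := hvec_half r hr i
    obtain ⟨m2, h2⟩ := hvec_half r₀ hr₀ i
    refine ⟨m1 - m2, ?_⟩
    rw [sub_vecMul]
    push_cast
    rw [Pi.sub_apply, h1, h2]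
    ring
  -- denominator bound : (2 * det G) • r is integral for r in the shadow
  have hDcoord : ∀ r ∈ latticeShadow G, ∃ w : Fin n → ℤ,
      ∀ i, ((2 * G.det : ℤ) : ℚ) * r i = w i := by
    intro r hr
    choose t ht using hvec_half r hr
    refine ⟨(fun i => 2 * t i + G i i) ᵥ* G.adjugate, fun i => ?_⟩
    have hadj : (G.adjugate).map (Int.cast : ℤ → ℚ) = (G.map (Int.cast : ℤ → ℚ)).adjugate := by
      have h2 := RingHom.map_adjugate (Int.castRingHom ℚ) G
      rw [RingHom.mapMatrix_apply, RingHom.mapMatrix_apply] at h2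
      simpa using h2
    have h5 : (((fun i => 2 * t i + G i i) ᵥ* G.adjugate) i : ℚ)
        = ((fun j => ((2 * t j + G j j : ℤ) : ℚ)) ᵥ* (G.map (Int.cast : ℤ → ℚ)).adjugate) i := by
      rw [← hadj, vecMul_int_cast]
    have h6 : (fun j => ((2 * t j + G j j : ℤ) : ℚ)) = ((2:ℚ) • r) ᵥ* (G.map (Int.cast : ℤ → ℚ)) := by
      funext j
      have h7 : (((2:ℚ) • r) ᵥ* (G.map (Int.cast : ℤ → ℚ))) j
          = 2 * (r ᵥ* (G.map (Int.cast : ℤ → ℚ))) j := by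
        simp only [vecMul, dotProduct, Pi.smul_apply, smul_eq_mul, Finset.mul_sum]
        exact Finset.sum_congr rfl fun l _ => by ring
      rw [h7, ht j]
      push_cast
      ring
    rw [h5, h6, vecMul_det, ← hdetZQ]
    push_cast [Pi.smul_apply, smul_eq_mul]
    ring
  -- the scaled-integrality with a positive natural denominator N
  have hdetne : (2 * G.det : ℤ) ≠ 0 := by
    have : G.det ≠ 0 := by
      intro h
      apply hdetQ
      rw [← hdetZQ, h]
      simp
    intro h
    rcases mul_eq_zero.mp h with h' | h'
    · norm_num at h'
    · exact this h'
  set N : ℕ := (2 * G.det).natAbs with hN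
  have hNpos : 0 < N := Int.natAbs_pos.mpr hdetne
  have hNcoord : ∀ r ∈ latticeShadow G, ∀ i, ∃ m : ℤ, (N : ℚ) * r i = m := by
    intro r hr i
    obtain ⟨w, hw⟩ := hDcoord r hr
    rcases Int.natAbs_eq (2 * G.det) with h | h
    · refine ⟨w i, ?_⟩
      have h2 : ((N : ℚ)) = ((2 * G.det : ℤ) : ℚ) := by
        rw [hN, ← Int.cast_natCast (R := ℚ), ← h]
      rw [h2, hw i]
    · refine ⟨-w i, ?_⟩
      have h2 : ((N : ℚ)) = -((2 * G.det : ℤ) : ℚ) := by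
        have h' : (((2 * G.det).natAbs : ℤ)) = -(2 * G.det) := by omega
        rw [hN, ← Int.cast_natCast (R := ℚ), h']
        push_cast
        ring
      rw [h2]
      have h3 := hw i
      push_cast at h3 ⊢
      linarith
  -- a uniform bound for ‖lam‖ on the shadow
  classical
  set Vfin : Finset (Fin n → ℚ) :=
    (Fintype.piFinset fun _ : Fin n => Finset.range N).image (fun w i => (w i : ℚ) / N) with hVfin
  set B : ℝ := ∑ v ∈ Vfin, ‖lam v‖ with hB
  have hBnn : 0 ≤ B := Finset.sum_nonneg fun v _ => norm_nonneg _
  have hBbound : ∀ r ∈ latticeShadow G, ‖lam r‖ ≤ B := by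
    intro r hr
    set x : Fin n → ℤ := fun i => -⌊r i⌋ with hx
    set r' : Fin n → ℚ := r + fun i => ((x i : ℚ)) with hr'def
    have hr'mem : r' ∈ latticeShadow G := hmem_add r hr x
    have hfr0 : ∀ i, 0 ≤ r' i := by
      intro i
      have : r' i = Int.fract (r i) := by
        simp only [hr'def, hx, Pi.add_apply, Int.fract]
        push_cast
        ring
      rw [this]
      exact Int.fract_nonneg _
    have hfr1 : ∀ i, r' i < 1 := by
      intro i
      have : r' i = Int.fract (r i) := by
        simp only [hr'def, hx, Pi.add_apply, Int.fract]
        push_cast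
        ring
      rw [this]
      exact Int.fract_lt_one _
    have hnorm_eq : ‖lam r‖ = ‖lam r'‖ := by
      have h2 : (r' + fun i => (((-x) i : ℤ) : ℚ)) = r := by
        funext i
        simp only [hr'def, hx, Pi.add_apply, Pi.neg_apply]
        push_cast
        ring
      have h3 := habs r' hr'mem (-x)
      rw [h2] at h3
      exact h3
    choose mf hmf using hNcoord r' hr'mem
    have hmf0 : ∀ i, 0 ≤ mf i := by
      intro i
      have h1 : (0:ℚ) ≤ (mf i : ℚ) := by
        rw [← hmf i]
        exact mul_nonneg (by positivity) (hfr0 i)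
      exact_mod_cast h1
    have hmfN : ∀ i, mf i < N := by
      intro i
      have h1 : (mf i : ℚ) < (N : ℚ) := by
        rw [← hmf i]
        calc (N:ℚ) * r' i < (N:ℚ) * 1 :=
          mul_lt_mul_of_pos_left (hfr1 i) (by exact_mod_cast hNpos)
        _ = (N:ℚ) := mul_one _
      exact_mod_cast h1
    have hmem : r' ∈ Vfin := by
      rw [hVfin]
      refine Finset.mem_image.mpr ⟨fun i => (mf i).toNat, ?_, ?_⟩
      · refine Fintype.mem_piFinset.mpr fun i => Finset.mem_range.mpr ?_
        have := hmfN i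
        have := hmf0 i
        omega
      · funext i
        have h0 : ((mf i).toNat : ℤ) = mf i := Int.toNat_of_nonneg (hmf0 i)
        have h1 : (((mf i).toNat : ℕ) : ℚ) = ((mf i : ℤ) : ℚ) := by exact_mod_cast congrArg (fun z : ℤ => (z : ℚ)) h0
        rw [h1, ← hmf i]
        have hNne : (N:ℚ) ≠ 0 := by
          have : (0:ℚ) < N := by exact_mod_cast hNpos
          exact this.ne'
        field_simp
    rw [hnorm_eq, hB]
    exact Finset.single_le_sum (f := fun v => ‖lam v‖) (fun v _ => norm_nonneg _) hmem
  -- norm of each theta coefficient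
  have hcnorm : ∀ v : Fin n → ℚ,
      ‖lam v * Complex.exp ((Real.pi : ℂ) * Complex.I * τ *
          (((v ⬝ᵥ (G.map (Int.cast : ℤ → ℚ)).mulVec v) : ℚ) : ℂ))‖
        = ‖lam v‖ * Real.exp (-(Real.pi * τ.im *
            ((v ⬝ᵥ (G.map (Int.cast : ℤ → ℚ)).mulVec v : ℚ) : ℝ))) := by
    intro v
    rw [norm_mul]
    congr 1
    rw [Complex.norm_exp]
    congr 1
    simp [Complex.mul_re, Complex.mul_im]
    try ring
  -- summability of the coefficient norms
  have hsum : Summable (fun r : latticeShadow G =>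
      ‖lam (r : Fin n → ℚ)‖ * Real.exp (-(Real.pi * τ.im *
        (((r : Fin n → ℚ) ⬝ᵥ (G.map (Int.cast : ℤ → ℚ)).mulVec (r : Fin n → ℚ) : ℚ) : ℝ)))) := by
    rcases Nat.eq_zero_or_pos n with hn | hn
    · subst hn
      exact Summable.of_finite
    · obtain ⟨a, ha, hqa⟩ := aux_quad_lb (G.map (Int.cast : ℤ → ℝ)) hpos
      have key : ∀ r : latticeShadow G, ∃ w : Fin n → ℤ,
          ∀ i, (N : ℚ) * (r : Fin n → ℚ) i = w i := fun r => by
        choose mf hmf using hNcoord (r : Fin n → ℚ) r.2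
        exact ⟨mf, hmf⟩
      choose φ hφ using key
      have hNQpos : (0:ℚ) < (N:ℚ) := by exact_mod_cast hNpos
      have hφinj : Function.Injective φ := by
        intro r s hrs
        apply Subtype.ext
        funext i
        have h1 := hφ r i
        have h2 := hφ s i
        rw [hrs] at h1
        have h3 : (N:ℚ) * (r : Fin n → ℚ) i = (N:ℚ) * (s : Fin n → ℚ) i := h1.trans h2.symm
        exact mul_left_cancel₀ hNQpos.ne' h3
      set b : ℝ := Real.pi * τ.im * a / ((N:ℝ)^2 * (n:ℝ)) with hb
      have hbpos : 0 < b := by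
        rw [hb]
        apply div_pos
        · positivity
        · have h1 : (0:ℝ) < (N:ℝ) := by exact_mod_cast hNpos
          have h2 : (0:ℝ) < (n:ℝ) := by exact_mod_cast hn
          positivity
      have hg : Summable (fun w : Fin n → ℤ => ∏ i, Real.exp (-(b * (w i : ℝ)^2))) :=
        aux_summable_pi n hbpos
      have hcomp : Summable (fun r : latticeShadow G =>
          B * ∏ i, Real.exp (-(b * (φ r i : ℝ)^2))) := (hg.comp_injective hφinj).mul_left B
      refine Summable.of_nonneg_of_le
        (fun r => mul_nonneg (norm_nonneg _) (Real.exp_pos _).le) (fun r => ?_) hcomp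
      have hb1 : ‖lam (r : Fin n → ℚ)‖ * Real.exp (-(Real.pi * τ.im *
            (((r : Fin n → ℚ) ⬝ᵥ (G.map (Int.cast : ℤ → ℚ)).mulVec (r : Fin n → ℚ) : ℚ) : ℝ)))
          ≤ B * Real.exp (-(Real.pi * τ.im *
            (((r : Fin n → ℚ) ⬝ᵥ (G.map (Int.cast : ℤ → ℚ)).mulVec (r : Fin n → ℚ) : ℚ) : ℝ))) :=
        mul_le_mul_of_nonneg_right (hBbound _ r.2) (Real.exp_pos _).le
      refine hb1.trans (mul_le_mul_of_nonneg_left ?_ hBnn)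
      rw [← Real.exp_sum]
      apply Real.exp_le_exp.mpr
      set vR : Fin n → ℝ := fun i => (((r : Fin n → ℚ) i : ℚ) : ℝ) with hvR
      have hcast : (((r : Fin n → ℚ) ⬝ᵥ (G.map (Int.cast : ℤ → ℚ)).mulVec (r : Fin n → ℚ) : ℚ) : ℝ)
          = vR ⬝ᵥ (G.map (Int.cast : ℤ → ℝ)).mulVec vR := cast_quad_QR G _
      have hq : a * ‖vR‖^2 ≤ vR ⬝ᵥ (G.map (Int.cast : ℤ → ℝ)).mulVec vR := hqa vR
      have hsum_neg : (∑ i, -(b * (φ r i : ℝ)^2)) = -(b * ∑ i, (φ r i : ℝ)^2) := by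
        rw [Finset.mul_sum, ← Finset.sum_neg_distrib]
      rw [hsum_neg, hcast]
      apply neg_le_neg
      -- show b * Σ (φ r i)² ≤ π τ.im * Q
      have hcoord : ∀ i, (φ r i : ℝ) = (N:ℝ) * vR i := by
        intro i
        have h1 := hφ r i
        have h2 : (((N : ℚ) * (r : Fin n → ℚ) i : ℚ) : ℝ) = ((φ r i : ℚ) : ℝ) := by
          rw [h1]
        push_cast at h2
        rw [hvR]
        push_cast
        linarith
      have hsq : ∀ i, (φ r i : ℝ)^2 ≤ (N:ℝ)^2 * ‖vR‖^2 := by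
        intro i
        rw [hcoord i, mul_pow]
        apply mul_le_mul_of_nonneg_left _ (by positivity)
        have h1 : |vR i| ≤ ‖vR‖ := by
          rw [← Real.norm_eq_abs]
          exact norm_le_pi_norm vR i
        have h2 : 0 ≤ |vR i| := abs_nonneg _
        nlinarith [sq_abs (vR i)]
      have hsum_sq : (∑ i, (φ r i : ℝ)^2) ≤ (n:ℝ) * ((N:ℝ)^2 * ‖vR‖^2) := by
        calc (∑ i, (φ r i : ℝ)^2) ≤ ∑ _i : Fin n, (N:ℝ)^2 * ‖vR‖^2 :=
              Finset.sum_le_sum fun i _ => hsq i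
          _ = (n:ℝ) * ((N:ℝ)^2 * ‖vR‖^2) := by
              rw [Finset.sum_const, Finset.card_univ, Fintype.card_fin, nsmul_eq_mul]
      have hNn : (0:ℝ) < (N:ℝ)^2 * (n:ℝ) := by
        have h1 : (0:ℝ) < (N:ℝ) := by exact_mod_cast hNpos
        have h2 : (0:ℝ) < (n:ℝ) := by exact_mod_cast hn
        positivity
      have hbe : b * ((n:ℝ) * ((N:ℝ)^2 * ‖vR‖^2)) = Real.pi * τ.im * (a * ‖vR‖^2) := by
        rw [hb]
        field_simp
      calc b * ∑ i, (φ r i : ℝ)^2 ≤ b * ((n:ℝ) * ((N:ℝ)^2 * ‖vR‖^2)) :=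
            mul_le_mul_of_nonneg_left hsum_sq hbpos.le
        _ = Real.pi * τ.im * (a * ‖vR‖^2) := hbe
        _ ≤ Real.pi * τ.im * (vR ⬝ᵥ (G.map (Int.cast : ℤ → ℝ)).mulVec vR) := by
            apply mul_le_mul_of_nonneg_left hq
            positivity
  -- integer frequency vectors k r with  (r - r₀)ᵀG = k r
  have hkex : ∀ r : latticeShadow G, ∃ w : Fin n → ℤ, ∀ i,
      (((r : Fin n → ℚ) - r₀) ᵥ* (G.map (Int.cast : ℤ → ℚ))) i = w i := fun r => by
    choose mf hmf using hfreq (r : Fin n → ℚ) r.2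
    exact ⟨mf, hmf⟩
  choose k hk using hkex
  have hk0 : ∀ i, k (⟨r₀, hr₀⟩ : latticeShadow G) i = 0 := by
    intro i
    have h1 := hk ⟨r₀, hr₀⟩ i
    rw [show ((((⟨r₀, hr₀⟩ : latticeShadow G) : Fin n → ℚ)) - r₀) = 0 from sub_self r₀] at h1
    rw [Matrix.zero_vecMul] at h1
    have h2 : ((0:ℤ):ℚ) = (k ⟨r₀, hr₀⟩ i : ℚ) := by simpa using h1
    exact_mod_cast h2.symm
  have hkne : ∀ r : latticeShadow G, (r : Fin n → ℚ) ≠ r₀ → ∃ i, k r i ≠ 0 := by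
    intro r hrne
    by_contra hcon
    push_neg at hcon
    have h1 : ((r : Fin n → ℚ) - r₀) ᵥ* (G.map (Int.cast : ℤ → ℚ)) = 0 := by
      funext i
      rw [hk r i, hcon i]
      simp
    have h2 := vecMul_inj _ hdetQ h1
    exact hrne (sub_eq_zero.mp h2)
  -- the indicator family on the unit box
  set Box : Set (Fin n → ℝ) := Set.univ.pi fun _ => Set.Icc (0:ℝ) 1 with hBox
  have hBoxm : MeasurableSet Box := MeasurableSet.univ_pi fun _ => measurableSet_Icc
  set F : latticeShadow G → (Fin n → ℝ) → ℂ := fun r u =>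
    Box.indicator (fun u =>
      (lam (r : Fin n → ℚ) * Complex.exp ((Real.pi : ℂ) * Complex.I * τ *
        ((((r : Fin n → ℚ) ⬝ᵥ (G.map (Int.cast : ℤ → ℚ)).mulVec (r : Fin n → ℚ)) : ℚ) : ℂ))) *
      Complex.exp (2 * (Real.pi : ℂ) * Complex.I *
        ∑ i, ((k r i : ℂ)) * ((u i : ℝ) : ℂ))) u
    with hF
  -- product form of F
  have hFprod : ∀ (r : latticeShadow G) (u : Fin n → ℝ),
      F r u = (lam (r : Fin n → ℚ) * Complex.exp ((Real.pi : ℂ) * Complex.I * τ *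
        ((((r : Fin n → ℚ) ⬝ᵥ (G.map (Int.cast : ℤ → ℚ)).mulVec (r : Fin n → ℚ)) : ℚ) : ℂ))) *
        ∏ i, (Set.Icc (0:ℝ) 1).indicator
          (fun t : ℝ => Complex.exp (2 * (Real.pi:ℂ) * Complex.I * ((k r i : ℂ)) * ((t:ℝ) : ℂ))) (u i) := by
    intro r u
    by_cases hu : u ∈ Box
    · have hmem : ∀ i, u i ∈ Set.Icc (0:ℝ) 1 := by
        have := Set.mem_univ_pi.mp hu
        simpa using this
      rw [hF]
      simp only []
      rw [Set.indicator_of_mem hu]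
      have h1 : ∀ i, (Set.Icc (0:ℝ) 1).indicator
          (fun t : ℝ => Complex.exp (2 * (Real.pi:ℂ) * Complex.I * ((k r i : ℂ)) * ((t:ℝ) : ℂ))) (u i)
          = Complex.exp (2 * (Real.pi:ℂ) * Complex.I * ((k r i : ℂ)) * ((u i : ℝ) : ℂ)) :=
        fun i => Set.indicator_of_mem (hmem i) _
      rw [Finset.prod_congr rfl (fun i _ => h1 i), ← Complex.exp_sum]
      congr 2
      rw [Finset.mul_sum]
      exact Finset.sum_congr rfl fun i _ => by ring
    · have h0 : ∃ i, u i ∉ Set.Icc (0:ℝ) 1 := by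
        by_contra h
        push_neg at h
        exact hu (Set.mem_univ_pi.mpr h)
      obtain ⟨i, hi⟩ := h0
      rw [hF]
      simp only []
      rw [Set.indicator_of_notMem hu]
      rw [Finset.prod_eq_zero (Finset.mem_univ i) (Set.indicator_of_notMem hi _), mul_zero]
  -- integrability
  have hFint : ∀ r : latticeShadow G, Integrable (F r) volume := by
    intro r
    rw [hF]
    simp only []
    rw [integrable_indicator_iff hBoxm]
    apply ContinuousOn.integrableOn_compact
    · rw [hBox]
      exact isCompact_univ_pi fun _ => isCompact_Icc
    · apply Continuous.continuousOn
      apply Continuous.mul continuous_const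
      apply Complex.continuous_exp.comp
      apply Continuous.mul continuous_const
      apply continuous_finset_sum
      intro i _
      exact Continuous.mul continuous_const (Complex.continuous_ofReal.comp (continuous_apply i))
  -- the volume of the box is 1
  have hvolBox : volume Box = 1 := by
    rw [hBox, volume_pi_pi]
    simp [Real.volume_Icc]
  -- value of ∫ ‖F r‖
  have hFnorm : ∀ r : latticeShadow G, (∫ u : Fin n → ℝ, ‖F r u‖)
      = ‖lam (r : Fin n → ℚ) * Complex.exp ((Real.pi : ℂ) * Complex.I * τ *
        ((((r : Fin n → ℚ) ⬝ᵥ (G.map (Int.cast : ℤ → ℚ)).mulVec (r : Fin n → ℚ)) : ℚ) : ℂ))‖ := by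
    intro r
    have h1 : ∀ u : Fin n → ℝ, ‖F r u‖
        = Box.indicator (fun _ => ‖lam (r : Fin n → ℚ) * Complex.exp ((Real.pi : ℂ) * Complex.I * τ *
          ((((r : Fin n → ℚ) ⬝ᵥ (G.map (Int.cast : ℤ → ℚ)).mulVec (r : Fin n → ℚ)) : ℚ) : ℂ))‖) u := by
      intro u
      rw [hF]
      simp only []
      rw [norm_indicator_eq_indicator_norm]
      congr 1
      funext u'
      rw [norm_mul]
      have h2 : ‖Complex.exp (2 * (Real.pi:ℂ) * Complex.I *
          ∑ i, ((k r i : ℂ)) * ((u' i : ℝ) : ℂ))‖ = 1 := by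
        rw [Complex.norm_exp]
        have hs : (∑ i, ((k r i : ℂ)) * ((u' i : ℝ) : ℂ))
            = (((∑ i, (k r i : ℝ) * u' i : ℝ)) : ℂ) := by
          push_cast
          rfl
        rw [hs]
        have hre : (2 * (Real.pi:ℂ) * Complex.I * (((∑ i, (k r i : ℝ) * u' i : ℝ)) : ℂ)).re = 0 := by
          simp
        rw [hre, Real.exp_zero]
      rw [h2, mul_one]
    rw [show (fun u : Fin n → ℝ => ‖F r u‖) = _ from funext h1]
    rw [integral_indicator hBoxm, setIntegral_const, measureReal_def, hvolBox]
    simp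
  -- pointwise vanishing of the series defining the integrand
  have hzero : ∀ u : Fin n → ℝ, (∑' r : latticeShadow G, F r u) = 0 := by
    intro u
    by_cases hu : u ∈ Box
    · have h1 : ∀ r : latticeShadow G, F r u =
        (lam (r : Fin n → ℚ) *
          Complex.exp ((Real.pi : ℂ) * Complex.I * τ *
              ((((r : Fin n → ℚ) ⬝ᵥ (G.map (Int.cast : ℤ → ℚ)).mulVec (r : Fin n → ℚ)) : ℚ) : ℂ)
            + 2 * (Real.pi : ℂ) * Complex.I *
              ((fun i => (((r : Fin n → ℚ)) i : ℂ)) ⬝ᵥ (G.map (Int.cast : ℤ → ℂ)).mulVec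
                (fun i => ((u i : ℝ) : ℂ)))))
        * Complex.exp (-(2 * (Real.pi : ℂ) * Complex.I *
            ∑ i, (((r₀ ᵥ* (G.map (Int.cast : ℤ → ℚ))) i : ℚ) : ℂ) * ((u i : ℝ) : ℂ))) := by
        intro r
        have hexp : 2 * (Real.pi:ℂ) * Complex.I * ∑ i, ((k r i : ℂ)) * ((u i : ℝ) : ℂ)
            = 2 * (Real.pi : ℂ) * Complex.I *
                ((fun i => (((r : Fin n → ℚ)) i : ℂ)) ⬝ᵥ (G.map (Int.cast : ℤ → ℂ)).mulVec
                  (fun i => ((u i : ℝ) : ℂ)))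
              + -(2 * (Real.pi : ℂ) * Complex.I *
                  ∑ i, (((r₀ ᵥ* (G.map (Int.cast : ℤ → ℚ))) i : ℚ) : ℂ) * ((u i : ℝ) : ℂ)) := by
          rw [cast_dot_QC G ((r : Fin n → ℚ)) (fun i => ((u i : ℝ) : ℂ))]
          have h2 : ∀ i, ((k r i : ℂ))
              = ((((r : Fin n → ℚ) ᵥ* (G.map (Int.cast : ℤ → ℚ))) i : ℚ) : ℂ)
                - (((r₀ ᵥ* (G.map (Int.cast : ℤ → ℚ))) i : ℚ) : ℂ) := by
            intro i
            have h3 := hk r i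
            rw [sub_vecMul, Pi.sub_apply] at h3
            exact_mod_cast congrArg (fun q : ℚ => (q : ℂ)) h3.symm
          rw [Finset.sum_congr rfl (fun i _ => by rw [h2 i])]
          have h5 : ∑ i, (((((r : Fin n → ℚ) ᵥ* (G.map (Int.cast : ℤ → ℚ))) i : ℚ) : ℂ)
                - (((r₀ ᵥ* (G.map (Int.cast : ℤ → ℚ))) i : ℚ) : ℂ)) * ((u i : ℝ) : ℂ)
              = (∑ i, ((((r : Fin n → ℚ) ᵥ* (G.map (Int.cast : ℤ → ℚ))) i : ℚ) : ℂ) * ((u i : ℝ) : ℂ))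
                - ∑ i, (((r₀ ᵥ* (G.map (Int.cast : ℤ → ℚ))) i : ℚ) : ℂ) * ((u i : ℝ) : ℂ) := by
            rw [← Finset.sum_sub_distrib]
            exact Finset.sum_congr rfl fun i _ => by ring
          rw [h5]
          ring
        calc F r u = (lam (r : Fin n → ℚ) * Complex.exp ((Real.pi : ℂ) * Complex.I * τ *
              ((((r : Fin n → ℚ) ⬝ᵥ (G.map (Int.cast : ℤ → ℚ)).mulVec (r : Fin n → ℚ)) : ℚ) : ℂ))) *
              Complex.exp (2 * (Real.pi : ℂ) * Complex.I *
                ∑ i, ((k r i : ℂ)) * ((u i : ℝ) : ℂ)) := by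
              rw [hF]
              simp only []
              rw [Set.indicator_of_mem hu]
          _ = lam (r : Fin n → ℚ) * Complex.exp (((Real.pi : ℂ) * Complex.I * τ *
              ((((r : Fin n → ℚ) ⬝ᵥ (G.map (Int.cast : ℤ → ℚ)).mulVec (r : Fin n → ℚ)) : ℚ) : ℂ))
              + (2 * (Real.pi : ℂ) * Complex.I *
                ∑ i, ((k r i : ℂ)) * ((u i : ℝ) : ℂ))) := by
              rw [mul_assoc, ← Complex.exp_add]
          _ = _ := by
              rw [hexp, ← add_assoc, Complex.exp_add, ← mul_assoc]
      rw [tsum_congr h1, tsum_mul_right]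
      have h2 : (∑' r : latticeShadow G,
          lam (r : Fin n → ℚ) *
            Complex.exp ((Real.pi : ℂ) * Complex.I * τ *
                ((((r : Fin n → ℚ) ⬝ᵥ (G.map (Int.cast : ℤ → ℚ)).mulVec (r : Fin n → ℚ)) : ℚ) : ℂ)
              + 2 * (Real.pi : ℂ) * Complex.I *
                ((fun i => (((r : Fin n → ℚ)) i : ℂ)) ⬝ᵥ (G.map (Int.cast : ℤ → ℂ)).mulVec
                  (fun i => ((u i : ℝ) : ℂ)))))
          = thetaFun G lam τ (fun i => ((u i : ℝ) : ℂ)) := rfl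
      rw [h2, hvanish, zero_mul]
    · have h1 : ∀ r : latticeShadow G, F r u = 0 := by
        intro r
        rw [hF]
        simp only []
        rw [Set.indicator_of_notMem hu]
      rw [tsum_congr h1, tsum_zero]
  -- interchange of sum and integral
  have hsum2 : Summable (fun r : latticeShadow G => ∫ u : Fin n → ℝ, ‖F r u‖) := by
    refine hsum.congr fun r => ?_
    rw [hFnorm r, hcnorm]
  have hswap := integral_tsum_of_summable_integral_norm (μ := (volume : Measure (Fin n → ℝ)))
    hFint hsum2
  -- each term of the swapped series
  have hterm : ∀ r : latticeShadow G, (∫ u : Fin n → ℝ, F r u)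
      = (lam (r : Fin n → ℚ) * Complex.exp ((Real.pi : ℂ) * Complex.I * τ *
        ((((r : Fin n → ℚ) ⬝ᵥ (G.map (Int.cast : ℤ → ℚ)).mulVec (r : Fin n → ℚ)) : ℚ) : ℂ))) *
        ∏ i, (if k r i = 0 then (1:ℂ) else 0) := by
    intro r
    rw [show (fun u : Fin n → ℝ => F r u) = _ from funext (hFprod r)]
    rw [integral_const_mul]
    congr 1
    rw [MeasureTheory.integral_fintype_prod_volume_eq_prod (𝕜 := ℂ) (ι := Fin n)
      (fun i (t : ℝ) => (Set.Icc (0:ℝ) 1).indicator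
        (fun t : ℝ => Complex.exp (2 * (Real.pi:ℂ) * Complex.I * ((k r i : ℂ)) * ((t:ℝ) : ℂ))) t)]
    exact Finset.prod_congr rfl fun i _ => aux_integral_char (k r i)
  have hre0 : ∀ r : latticeShadow G, r ≠ (⟨r₀, hr₀⟩ : latticeShadow G) →
      (∫ u : Fin n → ℝ, F r u) = 0 := by
    intro r hne
    obtain ⟨i, hi⟩ := hkne r (fun h => hne (Subtype.ext h))
    rw [hterm r, Finset.prod_eq_zero (Finset.mem_univ i)
      (show (if k r i = 0 then (1:ℂ) else 0) = 0 from if_neg hi), mul_zero]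
  have hr₀term : (∫ u : Fin n → ℝ, F (⟨r₀, hr₀⟩ : latticeShadow G) u)
      = lam r₀ * Complex.exp ((Real.pi : ℂ) * Complex.I * τ *
        (((r₀ ⬝ᵥ (G.map (Int.cast : ℤ → ℚ)).mulVec r₀) : ℚ) : ℂ)) := by
    rw [hterm]
    have h1 : ∀ i : Fin n, (if k (⟨r₀, hr₀⟩ : latticeShadow G) i = 0 then (1:ℂ) else 0) = 1 :=
      fun i => if_pos (hk0 i)
    rw [Finset.prod_congr rfl (fun i _ => h1 i), Finset.prod_const_one, mul_one]
  -- conclusion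
  have hfinal : lam r₀ * Complex.exp ((Real.pi : ℂ) * Complex.I * τ *
      (((r₀ ⬝ᵥ (G.map (Int.cast : ℤ → ℚ)).mulVec r₀) : ℚ) : ℂ)) = 0 := by
    rw [← hr₀term]
    rw [← tsum_eq_single (L := SummationFilter.unconditional (latticeShadow G)) (⟨r₀, hr₀⟩ : latticeShadow G) hre0]
    rw [hswap]
    rw [show (fun u : Fin n → ℝ => ∑' r : latticeShadow G, F r u) = fun _ => (0:ℂ) from funext hzero]
    simp
  rcases mul_eq_zero.mp hfinal with h | h
  · exact h
  · exact absurd h (Complex.exp_ne_zero _)
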